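/- arXiv:2311.16287 — 3 statements merged into one kernel-verified Lean document; each statement's English description precedes it below -/
import Mathlib

section
/- For every natural number n ≥ 0, the coefficient of u^n in the formal power series (in the variable u, with coefficients in the polynomial ring ℤ[t]) given by the finite product ∏_{k=1}^{n} (1 - t^{2k-2} u^k)^{-1} equals the polynomial ∑_{λ ⊢ n} t^{2(n - ℓ(λ))}, where the sum runs over all partitions λ of n. (This is the generating-function identity ∑_{n≥0} u^n ∑_{λ⊢n} t^{2(n-ℓ(λ))} = ∏_{k≥1} (1 - t^{2k-2} u^k)^{-1} from the Betti number computation of the Hilbert scheme of points on ℂ²; factors with index k > n do not affect the coefficient of u^n, so the finite product suffices.) -/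
open PowerSeries Finset

noncomputable section AuxStmt0

variable {R : Type*} [CommRing R]

/-- geometric series for `Ring.inverse (1 - C a * X^k)` -/
lemma aux_geom (a : R) (k : ℕ) (hk : 0 < k) :
    Ring.inverse (1 - C a * X ^ k) =
      PowerSeries.mk fun m => if k ∣ m then a ^ (m / k) else 0 := by
  set g : PowerSeries R := PowerSeries.mk fun m => if k ∣ m then a ^ (m / k) else 0 with hg
  have key : (1 - C a * X ^ k) * g = 1 := by
    ext n
    rw [sub_mul, one_mul, map_sub, mul_assoc]
    rw [PowerSeries.coeff_one]
    have hXg : coeff n (X ^ k * g) = if k ≤ n then coeff (n - k) g else 0 :=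
      coeff_X_pow_mul' g k n
    rw [coeff_C_mul, hXg, hg, coeff_mk]
    rcases Nat.eq_zero_or_pos n with rfl | hn
    · simp [Nat.not_le.mpr hk]
    · rw [if_neg hn.ne']
      by_cases hkn : k ≤ n
      · rw [if_pos hkn, coeff_mk]
        have hdvd : k ∣ n ↔ k ∣ n - k := by
          constructor
          · intro h; exact (Nat.dvd_sub h dvd_rfl)
          · intro h; have := Nat.dvd_add h dvd_rfl
            rwa [Nat.sub_add_cancel hkn] at this
        by_cases h : k ∣ n
        · rw [if_pos h, if_pos (hdvd.mp h)]
          have h1 : 1 ≤ n / k := Nat.one_le_div_iff hk |>.mpr hkn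
          have : (n - k) / k = n / k - 1 := by
            rcases h with ⟨c, rfl⟩
            match c with
            | 0 => simp
            | c + 1 =>
              rw [Nat.mul_succ, Nat.add_sub_cancel, Nat.add_div_right _ hk,
                Nat.mul_div_cancel_left _ hk, Nat.add_sub_cancel]
          rw [this, sub_eq_zero, ← pow_succ']
          congr 1
          omega
        · rw [if_neg h, if_neg (fun hc => h (hdvd.mpr hc)), mul_zero, sub_zero]
      · rw [if_neg hkn, mul_zero, sub_zero, if_neg]
        intro hd
        exact hkn (Nat.le_of_dvd hn hd)
  have key2 : g * (1 - C a * X ^ k) = 1 := by rw [mul_comm]; exact key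
  exact Ring.inverse_unit ⟨_, g, key, key2⟩

lemma aux_prod_pow {M : Type*} [CommMonoid M] (x : M) (f : ℕ → ℕ) (m : Multiset ℕ) :
    (m.map fun j => x ^ f j).prod = x ^ (m.map f).sum := by
  induction m using Multiset.induction with
  | empty => simp
  | cons a s ih => simp [ih, pow_add]

/-- the weighted workhorse -/
lemma aux_main (n : ℕ) (w : ℕ → R) :
    coeff (R := R) n (∏ k ∈ Icc 1 n, PowerSeries.mk fun m => if k ∣ m then (w k) ^ (m / k) else 0) =
    ∑ p : Nat.Partition n, (p.parts.map w).prod := by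
  classical
  rw [coeff_prod]
  simp only [coeff_mk]
  have step1 : ∀ l : ℕ →₀ ℕ,
      (∏ i ∈ Icc 1 n, if i ∣ l i then w i ^ (l i / i) else 0) =
      if (∀ i ∈ Icc 1 n, i ∣ l i) then ∏ i ∈ Icc 1 n, w i ^ (l i / i) else 0 :=
    fun l => Finset.prod_ite_zero
  rw [Finset.sum_congr rfl fun l _ => step1 l, ← Finset.sum_filter]
  have hmem : ∀ p : Nat.Partition n, ∀ j ∈ p.parts, j ∈ Icc 1 n := by
    intro p j hj
    rw [mem_Icc]
    refine ⟨p.parts_pos hj, ?_⟩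
    rw [← p.parts_sum]
    exact Multiset.single_le_sum (fun _ _ => Nat.zero_le _) j hj
  symm
  set T := Finset.filter (fun l : ℕ →₀ ℕ => ∀ i ∈ Icc 1 n, i ∣ l i)
    (finsuppAntidiag (Icc 1 n) n) with hT
  set φ : Nat.Partition n → (ℕ →₀ ℕ) := fun p =>
    { toFun := fun i => p.parts.count i * i
      support := p.parts.toFinset
      mem_support_toFun := fun i => by
        simp only [Multiset.mem_toFinset, ne_eq, mul_eq_zero, Multiset.count_eq_zero, not_or]
        constructor
        · intro hi
          exact ⟨by simpa using hi, fun h0 => by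
            simpa using (Nat.lt_irrefl 0 (p.parts_pos (h0 ▸ hi)))⟩
        · tauto } with hφ
  have hφsum : ∀ p : Nat.Partition n, ∑ i ∈ Icc 1 n, p.parts.count i * i = n := by
    intro p
    conv_rhs => rw [← p.parts_sum]
    rw [sum_multiset_count_of_subset _ (Icc 1 n)]
    · simp [smul_eq_mul]
    · intro i hi
      exact hmem p i (by simpa using hi)
  have hφT : ∀ p : Nat.Partition n, φ p ∈ T := by
    intro p
    rw [hT, mem_filter, mem_finsuppAntidiag]
    refine ⟨⟨?_, ?_⟩, ?_⟩
    · exact hφsum p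
    · intro i hi
      exact hmem p i (by simpa [hφ] using hi)
    · intro i _
      exact Dvd.intro_left _ rfl
  set ψ : ∀ l ∈ T, Nat.Partition n := fun l hl => by
    rw [hT, mem_filter, mem_finsuppAntidiag] at hl
    exact
    { parts := ∑ i ∈ Icc 1 n, Multiset.replicate (l i / i) i
      parts_pos := by
        intro i hi
        simp only [Multiset.mem_sum] at hi
        rcases hi with ⟨j, hj, hij⟩
        have := Multiset.eq_of_mem_replicate hij
        subst this
        exact (mem_Icc.mp hj).1
      parts_sum := by
        simp_rw [Multiset.sum_sum, Multiset.sum_replicate, smul_eq_mul]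
        conv_rhs => rw [← hl.1.1]
        refine Finset.sum_congr rfl fun i hi => ?_
        exact Nat.div_mul_cancel (hl.2 i hi) } with hψ
  have hcount : ∀ l (hl : l ∈ T) (i : ℕ),
      (ψ l hl).parts.count i = if i ∈ Icc 1 n then l i / i else 0 := by
    intro l hl i
    simp only [hψ]
    simp_rw [Multiset.count_sum', Multiset.count_replicate]
    rw [Finset.sum_ite_eq' (Icc 1 n) i (fun j => l j / j)]
  refine Finset.sum_bij' (fun p _ => φ p) ψ (fun p _ => hφT p) (fun l hl => mem_univ _)
    ?_ ?_ ?_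
  · -- left inverse : ψ (φ p) = p
    intro p _
    apply Nat.Partition.ext
    ext i
    rw [hcount _ (hφT p)]
    split_ifs with hi
    · have h1 : 1 ≤ i := (mem_Icc.mp hi).1
      simp only [hφ, Finsupp.coe_mk]
      exact Nat.mul_div_cancel _ (Nat.lt_of_lt_of_le Nat.zero_lt_one h1)
    · symm
      rw [Multiset.count_eq_zero]
      intro hmem'
      exact hi (hmem p i hmem')
  · -- right inverse : φ (ψ l) = l
    intro l hl
    have hl' := hl
    rw [hT, mem_filter, mem_finsuppAntidiag] at hl'
    ext i
    simp only [hφ, Finsupp.coe_mk]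
    rw [hcount _ hl]
    split_ifs with hi
    · exact Nat.div_mul_cancel (hl'.2 i hi)
    · rw [zero_mul]
      symm
      rw [← Finsupp.notMem_support_iff]
      exact fun hc => hi (hl'.1.2 hc)
  · -- weights agree
    intro p _
    rw [prod_multiset_map_count]
    rw [Finset.prod_subset (fun i hi => hmem p i (by simpa using hi))]
    · refine Finset.prod_congr rfl fun i hi => ?_
      congr 1
      simp only [hφ, Finsupp.coe_mk]
      have h1 : 0 < i := (mem_Icc.mp hi).1
      rw [Nat.mul_div_cancel _ h1]
    · intro i _ hi
      rw [Multiset.count_eq_zero_of_notMem (by simpa using hi), pow_zero]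

end AuxStmt0

/-- The coefficient of `u^n` in `∏_{k=1}^{n} (1 - t^{2k-2} u^k)⁻¹` (a power series in `u`
with coefficients in `ℤ[t]`) equals `∑_{λ ⊢ n} t^{2(n - ℓ(λ))}`. -/
theorem stmt0 (n : ℕ) :
    PowerSeries.coeff (R := Polynomial ℤ) n
      (∏ k ∈ Finset.Icc 1 n,
        Ring.inverse (1 - PowerSeries.C (R := Polynomial ℤ) (Polynomial.X ^ (2 * k - 2)) *
          (PowerSeries.X : PowerSeries (Polynomial ℤ)) ^ k)) =
    ∑ p : Nat.Partition n, (Polynomial.X : Polynomial ℤ) ^ (2 * (n - p.parts.card)) := by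
  classical
  have hprod : ∀ k ∈ Finset.Icc 1 n,
      Ring.inverse (1 - PowerSeries.C (R := Polynomial ℤ) (Polynomial.X ^ (2 * k - 2)) *
          (PowerSeries.X : PowerSeries (Polynomial ℤ)) ^ k) =
      PowerSeries.mk fun m => if k ∣ m then ((Polynomial.X : Polynomial ℤ) ^ (2 * k - 2)) ^ (m / k) else 0 := by
    intro k hk
    exact aux_geom _ k (mem_Icc.mp hk).1
  rw [Finset.prod_congr rfl hprod, aux_main n (fun k => (Polynomial.X : Polynomial ℤ) ^ (2 * k - 2))]
  refine Finset.sum_congr rfl fun p _ => ?_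
  rw [aux_prod_pow]
  congr 1
  have key : ∀ s : Multiset ℕ, (∀ j ∈ s, 0 < j) →
      (s.map fun j => 2 * j - 2).sum + 2 * Multiset.card s = 2 * s.sum := by
    intro s
    induction s using Multiset.induction with
    | empty => simp
    | cons a t ih =>
      intro hpos
      have ha : 0 < a := hpos a (Multiset.mem_cons_self a t)
      have ht := ih fun j hj => hpos j (Multiset.mem_cons_of_mem hj)
      simp only [Multiset.map_cons, Multiset.sum_cons, Multiset.card_cons]
      omega
  have hsum := key p.parts fun j hj => p.parts_pos hj
  rw [p.parts_sum] at hsum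
  omega
end

section
/- For every natural number n ≥ 0, the coefficient of u^n in the formal power series (in the variable u, with coefficients in the polynomial ring ℤ[t]) given by the finite product ∏_{m=0}^{n} (1 - t^{2m} u^{2m+1})^{-1} (1 - t^{2m} u^{2m+2})^{-1} equals the polynomial ∑_{λ ⊢ n} t^{n - ℓ(λ) - ℓ_even(λ)}, where the sum runs over all partitions λ of n. (This is the generating-function identity ∑_{n≥0} u^n ∑_{λ⊢n} t^{n-ℓ(λ)-ℓ_even(λ)} = ∏_{m≥0} [(1 - t^{2m}u^{2m+1})(1 - t^{2m}u^{2m+2})]^{-1} arising from the Betti numbers of the fixed-point set ((ℂ²)^{[n]})^τ; factors with index m > n do not affect the coefficient of u^n.) -/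
open Finset PowerSeries

section Stmt1Aux

lemma stmt1_inverse {R : Type*} [CommRing R] (a : R) (k : ℕ) (hk : 0 < k) :
    Ring.inverse (1 - PowerSeries.C (R := R) a * (PowerSeries.X : PowerSeries R) ^ k) =
      PowerSeries.mk fun d => if k ∣ d then a ^ (d / k) else 0 := by
  set f : PowerSeries R := PowerSeries.mk fun d => if k ∣ d then a ^ (d / k) else 0 with hf
  have key : (1 - PowerSeries.C (R := R) a * (X : PowerSeries R) ^ k) * f = 1 := by
    have hrw : (1 - PowerSeries.C (R := R) a * (X : PowerSeries R) ^ k) * f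
        = f - f * X ^ k * PowerSeries.C (R := R) a := by ring
    ext d
    rw [hrw, map_sub, PowerSeries.coeff_mul_C, PowerSeries.coeff_mul_X_pow', hf]
    simp only [PowerSeries.coeff_mk, PowerSeries.coeff_one]
    by_cases hd : k ≤ d
    · have hne : ¬ d = 0 := by omega
      rw [if_neg hne, if_pos hd]
      by_cases hdvd : k ∣ d
      · have hdvd' : k ∣ d - k := Nat.dvd_sub hdvd dvd_rfl
        rw [if_pos hdvd, if_pos hdvd', Nat.div_eq_sub_div hk hd, pow_succ, sub_self]
      · have hdvd' : ¬ k ∣ d - k := fun h => hdvd (by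
          have := Nat.dvd_add h (dvd_refl k)
          rwa [Nat.sub_add_cancel hd] at this)
        rw [if_neg hdvd, if_neg hdvd', zero_mul, sub_zero]
    · rw [if_neg hd, zero_mul, sub_zero]
      rcases Nat.eq_zero_or_pos d with rfl | hd0
      · simp
      · rw [if_neg (fun h => hd (Nat.le_of_dvd hd0 h)), if_neg (by omega)]
  have hu : IsUnit (1 - PowerSeries.C (R := R) a * (X : PowerSeries R) ^ k) :=
    IsUnit.of_mul_eq_one _ key
  calc Ring.inverse (1 - PowerSeries.C (R := R) a * (X : PowerSeries R) ^ k)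
      = Ring.inverse (1 - PowerSeries.C (R := R) a * (X : PowerSeries R) ^ k) *
          ((1 - PowerSeries.C (R := R) a * (X : PowerSeries R) ^ k) * f) := by rw [key, mul_one]
    _ = f := by rw [← mul_assoc, Ring.inverse_mul_cancel _ hu, one_mul]

open scoped Classical in
/-- The weighted generating-function identity: the `n`-th coefficient of a product of
geometric series `∑_j (w i)^j u^{i j}` over part sizes `i ∈ s` is the weighted sum
over partitions of `n` with parts in `s`. -/
lemma stmt1_coeff_prod {R : Type*} [CommSemiring R] (n : ℕ) (s : Finset ℕ)
    (hs : ∀ i ∈ s, 0 < i) (w : ℕ → R) :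
    PowerSeries.coeff (R := R) n
        (∏ i ∈ s, PowerSeries.mk fun d => if i ∣ d then w i ^ (d / i) else 0) =
      ∑ p ∈ Finset.univ.filter (fun p : Nat.Partition n => ∀ j ∈ p.parts, j ∈ s),
        ∏ i ∈ s, w i ^ (p.parts.count i) := by
  rw [PowerSeries.coeff_prod]
  simp only [PowerSeries.coeff_mk]
  rw [← Finset.sum_filter_of_ne (p := fun l : ℕ →₀ ℕ => ∀ i ∈ s, i ∣ l i)
    (fun l _ hne i hi => by
      by_contra hdvd
      exact hne (Finset.prod_eq_zero hi (if_neg hdvd)))]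
  refine (Finset.sum_bij (fun (p : Nat.Partition n) _ =>
    ({ toFun := fun i => p.parts.count i • i
       support := Finset.filter (fun i => i ≠ 0) p.parts.toFinset
       mem_support_toFun := fun a => by
         simp only [smul_eq_mul, ne_eq, mul_eq_zero, Multiset.count_eq_zero]
         rw [not_or, not_not]
         simp only [Multiset.mem_toFinset, not_not, mem_filter] } : ℕ →₀ ℕ))
    ?_ ?_ ?_ ?_).symm
  · -- membership
    intro p hp
    simp only [mem_filter, mem_univ, true_and] at hp
    simp only [mem_filter, mem_finsuppAntidiag]
    dsimp only [ne_eq, smul_eq_mul, Finsupp.coe_mk]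
    refine ⟨⟨?_, fun i ↦ ?_⟩, fun i _ ↦ dvd_mul_left i _⟩
    · conv_rhs => rw [← p.parts_sum]
      rw [Finset.sum_multiset_count_of_subset _ s]
      · simp only [smul_eq_mul]
      · intro i hi
        exact hp i (Multiset.mem_toFinset.mp hi)
    · simp only [ne_eq, Multiset.mem_toFinset, not_not, mem_filter, and_imp]
      exact fun hi _ ↦ hp i hi
  · -- injectivity
    intro p₁ hp₁ p₂ hp₂ h
    apply Nat.Partition.ext
    simp only [mem_filter, mem_univ, true_and] at hp₁ hp₂
    ext i
    simp only [ne_eq, Multiset.mem_toFinset, not_not, smul_eq_mul, Finsupp.mk.injEq] at h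
    by_cases hi : i = 0
    · rw [hi]
      rw [Multiset.count_eq_zero_of_notMem]
      · rw [Multiset.count_eq_zero_of_notMem]
        intro a; exact Nat.lt_irrefl 0 (p₂.parts_pos a)
      intro a; exact Nat.lt_irrefl 0 (p₁.parts_pos a)
    · rw [← mul_left_inj' hi]
      rw [funext_iff] at h
      exact h.2 i
  · -- surjectivity
    simp only [mem_filter, mem_finsuppAntidiag, mem_univ, true_and, and_assoc]
    rintro f ⟨hf, hf₃, hf₄⟩
    refine ⟨⟨∑ i ∈ s, Multiset.replicate (f i / i) i, ?_, ?_⟩, ?_, ?_⟩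
    · intro i hi
      simp only [Multiset.mem_sum] at hi
      rcases hi with ⟨t, ht, z⟩
      rw [Multiset.eq_of_mem_replicate z]
      exact hs t ht
    · simp_rw [Multiset.sum_sum, Multiset.sum_replicate, Nat.nsmul_eq_mul]
      rw [← hf]
      exact Finset.sum_congr rfl fun i hi => Nat.div_mul_cancel (hf₄ i hi)
    · intro i hi
      simp only [Multiset.mem_sum] at hi
      rcases hi with ⟨j, hj₁, hj₂⟩
      rwa [Multiset.eq_of_mem_replicate hj₂]
    · ext i
      simp_rw [Multiset.count_sum', Multiset.count_replicate, Finset.sum_ite_eq']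
      simp only [ne_eq, Multiset.mem_toFinset, not_not, smul_eq_mul, ite_mul,
        zero_mul, Finsupp.coe_mk]
      split_ifs with h
      · exact Nat.div_mul_cancel (hf₄ i h)
      · symm
        rw [← Finsupp.notMem_support_iff]
        exact fun hmem => h (hf₃ hmem)
  · -- values agree
    intro p hp
    refine Finset.prod_congr rfl fun i hi => ?_
    simp only [Finsupp.coe_mk, smul_eq_mul]
    rw [if_pos (dvd_mul_left i _), Nat.mul_div_cancel _ (hs i hi)]

end Stmt1Aux

/-- The coefficient of `u^n` in `∏_{m=0}^{n} (1 - t^{2m} u^{2m+1})⁻¹ (1 - t^{2m} u^{2m+2})⁻¹`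
(a power series in `u` with coefficients in `ℤ[t]`) equals
`∑_{λ ⊢ n} t^{n - ℓ(λ) - ℓ_even(λ)}`. -/
theorem stmt1 (n : ℕ) :
    PowerSeries.coeff (R := Polynomial ℤ) n
      (∏ m ∈ Finset.range (n + 1),
        (Ring.inverse (1 - PowerSeries.C (R := Polynomial ℤ) (Polynomial.X ^ (2 * m)) *
            (PowerSeries.X : PowerSeries (Polynomial ℤ)) ^ (2 * m + 1)) *
         Ring.inverse (1 - PowerSeries.C (R := Polynomial ℤ) (Polynomial.X ^ (2 * m)) *
            (PowerSeries.X : PowerSeries (Polynomial ℤ)) ^ (2 * m + 2)))) =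
    ∑ p : Nat.Partition n,
      (Polynomial.X : Polynomial ℤ) ^
        (n - p.parts.card - (p.parts.filter (fun i => Even i)).card) := by
  classical
  -- weight: `w k = X ^ (k - 1 - [k even])`
  set w : ℕ → Polynomial ℤ :=
    fun k => (Polynomial.X : Polynomial ℤ) ^ (k - 1 - (if Even k then 1 else 0)) with hw
  set G : ℕ → PowerSeries (Polynomial ℤ) :=
    fun k => PowerSeries.mk fun d => if k ∣ d then w k ^ (d / k) else 0 with hG
  have hprod : (∏ m ∈ Finset.range (n + 1),
      (Ring.inverse (1 - PowerSeries.C (R := Polynomial ℤ) (Polynomial.X ^ (2 * m)) *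
          (PowerSeries.X : PowerSeries (Polynomial ℤ)) ^ (2 * m + 1)) *
       Ring.inverse (1 - PowerSeries.C (R := Polynomial ℤ) (Polynomial.X ^ (2 * m)) *
          (PowerSeries.X : PowerSeries (Polynomial ℤ)) ^ (2 * m + 2)))) =
      ∏ k ∈ Finset.Icc 1 (2 * (n + 1)), G k := by
    induction n + 1 with
    | zero => simp
    | succ N ih =>
      rw [Finset.prod_range_succ, ih]
      have h1 : 2 * (N + 1) = 2 * N + 1 + 1 := by ring
      rw [h1, Finset.prod_Icc_succ_top (by omega), Finset.prod_Icc_succ_top (by omega),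
        mul_assoc]
      congr 1
      have e1 : w (2 * N + 1) = Polynomial.X ^ (2 * N) := by
        simp only [hw]
        have hne : ¬ Even (2 * N + 1) := by
          rintro ⟨r, hr⟩
          omega
        rw [if_neg hne]
        congr 1
      have e2 : w (2 * N + 2) = Polynomial.X ^ (2 * N) := by
        simp only [hw]
        have hev : Even (2 * N + 2) := ⟨N + 1, by ring⟩
        rw [if_pos hev]
        congr 1
      have g1 : G (2 * N + 1) = PowerSeries.mk fun d =>
          if 2 * N + 1 ∣ d then ((Polynomial.X : Polynomial ℤ) ^ (2 * N)) ^ (d / (2 * N + 1))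
          else 0 := by
        simp only [hG, e1]
      have g2 : G (2 * N + 1 + 1) = PowerSeries.mk fun d =>
          if 2 * N + 2 ∣ d then ((Polynomial.X : Polynomial ℤ) ^ (2 * N)) ^ (d / (2 * N + 2))
          else 0 := by
        simp only [hG]
        rw [show (2 * N + 1 + 1 : ℕ) = 2 * N + 2 by omega, e2]
      rw [g1, g2, stmt1_inverse _ _ (by omega : 0 < 2 * N + 1),
        stmt1_inverse _ _ (by omega : 0 < 2 * N + 2)]
  rw [hprod, hG, stmt1_coeff_prod n (Finset.Icc 1 (2 * (n + 1))) (fun i hi => by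
      simp only [Finset.mem_Icc] at hi; omega) w]
  have hfilter : (Finset.univ.filter
      (fun p : Nat.Partition n => ∀ j ∈ p.parts, j ∈ Finset.Icc 1 (2 * (n + 1)))) =
      Finset.univ := by
    apply Finset.filter_true_of_mem
    intro p _ j hj
    have h1 : 0 < j := p.parts_pos hj
    have h2 : j ≤ n := by
      have := Multiset.single_le_sum (fun _ _ => Nat.zero_le _) _ hj
      rwa [p.parts_sum] at this
    simp only [Finset.mem_Icc]
    omega
  rw [hfilter]
  refine Finset.sum_congr rfl fun p _ => ?_
  rw [hw]
  simp_rw [← pow_mul]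
  rw [Finset.prod_pow_eq_pow_sum]
  congr 1
  -- exponent identity
  set s := Finset.Icc 1 (2 * (n + 1)) with hs
  have hsub : p.parts.toFinset ⊆ s := by
    intro j hj
    rw [Multiset.mem_toFinset] at hj
    have h1 : 0 < j := p.parts_pos hj
    have h2 : j ≤ n := by
      have := Multiset.single_le_sum (fun _ _ => Nat.zero_le _) _ hj
      rwa [p.parts_sum] at this
    simp only [hs, Finset.mem_Icc]
    omega
  have hn : ∑ i ∈ s, i * p.parts.count i = n := by
    conv_rhs => rw [← p.parts_sum]
    rw [Finset.sum_multiset_count_of_subset _ s hsub]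
    exact Finset.sum_congr rfl fun i _ => by rw [smul_eq_mul, mul_comm]
  have hcard : ∑ i ∈ s, p.parts.count i = p.parts.card := by
    rw [← Multiset.toFinset_sum_count_eq]
    exact (Finset.sum_subset hsub (fun i _ hi => by
      rwa [Multiset.count_eq_zero, ← Multiset.mem_toFinset])).symm
  have hsub2 : (p.parts.filter (fun i => Even i)).toFinset ⊆ s := by
    intro j hj
    apply hsub
    rw [Multiset.mem_toFinset] at hj ⊢
    exact Multiset.mem_of_mem_filter hj
  have heven : ∑ i ∈ s, (if Even i then p.parts.count i else 0) =
      (p.parts.filter (fun i => Even i)).card := by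
    rw [← Multiset.toFinset_sum_count_eq,
      Finset.sum_subset hsub2 (fun i _ hi => Multiset.count_eq_zero.mpr
        (fun hm => hi (Multiset.mem_toFinset.mpr hm)))]
    exact Finset.sum_congr rfl fun i _ => by rw [Multiset.count_filter]
  have hptw : ∀ i ∈ s, (i - 1 - (if Even i then 1 else 0)) * p.parts.count i
      + (p.parts.count i + (if Even i then p.parts.count i else 0)) = i * p.parts.count i := by
    intro i hi
    simp only [hs, Finset.mem_Icc] at hi
    by_cases he : Even i
    · have h2 : 2 ≤ i := by
        rcases he with ⟨r, rfl⟩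
        omega
      rw [if_pos he, if_pos he]
      have h3 : i * p.parts.count i =
          (i - 1 - 1) * p.parts.count i + 2 * p.parts.count i := by
        rw [← add_mul]
        congr 1
        omega
      rw [h3]
      ring
    · rw [if_neg he, if_neg he]
      have h3 : i * p.parts.count i =
          (i - 1 - 0) * p.parts.count i + 1 * p.parts.count i := by
        rw [← add_mul]
        congr 1
        omega
      rw [h3]
      ring
  have hsum : ∑ i ∈ s, ((i - 1 - (if Even i then 1 else 0)) * p.parts.count i
      + (p.parts.count i + (if Even i then p.parts.count i else 0))) = n := by
    rw [Finset.sum_congr rfl hptw]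
    exact hn
  rw [Finset.sum_add_distrib, Finset.sum_add_distrib, hcard, heven] at hsum
  omega
end

section
/- Let λ be a partition of n with parts λ_1 ≥ ⋯ ≥ λ_k > 0 and let I_λ ⊆ ℂ[x,y] be the ideal generated by x^a y^{λ_{a+1}} for 0 ≤ a ≤ k−1 together with x^k. Let σ be the ℂ-algebra automorphism of ℂ[x,y] determined by σ(x) = x and σ(y) = −y. Then σ maps I_λ to itself, hence induces a ℂ-linear involution of the n-dimensional quotient ℂ[x,y]/I_λ; the +1-eigenspace of this involution has dimension (n + ℓ_odd(λ))/2 and the −1-eigenspace has dimension (n − ℓ_odd(λ))/2, where ℓ_odd(λ) is the number of odd parts of λ. In particular n ≡ ℓ_odd(λ) (mod 2). -/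
open MvPolynomial

noncomputable section StmtAux

/-! ### Auxiliary linear algebra: eigenspaces of a diagonal operator -/

theorem stmt9_eig_aux {V : Type*} [AddCommGroup V] [Module ℂ V] {ι : Type*}
    (b : Module.Basis ι ℂ V) (T : Module.End ℂ V) (μ μ' : ℂ) (hne : μ ≠ μ') (p : ι → Prop)
    (h1 : ∀ i, p i → T (b i) = μ • b i) (h2 : ∀ i, ¬ p i → T (b i) = μ' • b i) :
    T.eigenspace μ = Submodule.span ℂ (b '' {i | p i}) := by
  set W := Submodule.span ℂ (b '' {i | p i}) with hW
  set W' := Submodule.span ℂ (b '' {i | ¬ p i}) with hW'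
  have hWle : W ≤ T.eigenspace μ := by
    rw [hW, Submodule.span_le]
    rintro x ⟨i, hi, rfl⟩
    exact Module.End.mem_eigenspace_iff.2 (h1 i hi)
  have hW'le : W' ≤ T.eigenspace μ' := by
    rw [hW', Submodule.span_le]
    rintro x ⟨i, hi, rfl⟩
    exact Module.End.mem_eigenspace_iff.2 (h2 i hi)
  have hsup : W ⊔ W' = ⊤ := by
    rw [hW, hW', ← Submodule.span_union, ← Set.image_union]
    have : {i | p i} ∪ {i | ¬ p i} = Set.univ := by
      ext i; by_cases h : p i <;> simp [h]
    rw [this, Set.image_univ, b.span_eq]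
  have hdisj : ∀ x, x ∈ T.eigenspace μ → x ∈ T.eigenspace μ' → x = 0 := by
    intro x hx hx'
    rw [Module.End.mem_eigenspace_iff] at hx hx'
    have : (μ - μ') • x = 0 := by rw [sub_smul, hx.symm.trans hx', sub_self]
    rcases smul_eq_zero.1 this with h | h
    · exact absurd (sub_eq_zero.1 h) hne
    · exact h
  refine le_antisymm ?_ hWle
  intro v hv
  have : v ∈ W ⊔ W' := hsup ▸ Submodule.mem_top
  rcases Submodule.mem_sup.1 this with ⟨w, hw, w', hw', rfl⟩
  have hz : w' = 0 := hdisj w'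
    (by have := Submodule.sub_mem _ hv (hWle hw); simpa using this)
    (hW'le hw')
  simpa [hz] using hw

theorem stmt9_eig_card {V : Type*} [AddCommGroup V] [Module ℂ V] {ι : Type*} [Fintype ι]
    (b : Module.Basis ι ℂ V) (T : Module.End ℂ V) (μ μ' : ℂ) (hne : μ ≠ μ') (p : ι → Prop)
    (h1 : ∀ i, p i → T (b i) = μ • b i) (h2 : ∀ i, ¬ p i → T (b i) = μ' • b i) :
    Module.finrank ℂ (T.eigenspace μ) = Nat.card {i // p i} := by
  classical
  rw [stmt9_eig_aux b T μ μ' hne p h1 h2]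
  have himg : b '' {i | p i} = Set.range (b ∘ (Subtype.val : {i // p i} → ι)) := by
    rw [Set.range_comp, Subtype.range_coe_subtype]
  rw [himg, finrank_span_eq_card (b.linearIndependent.comp Subtype.val Subtype.val_injective),
    Nat.card_eq_fintype_card]

/-! ### Auxiliary counting lemmas -/

theorem stmt9_count_even (m : ℕ) :
    2 * Nat.card {b : Fin m // Even (b : ℕ)} = m + m % 2 := by
  induction m with
  | zero => simp
  | succ m ih =>
    have he : {b : Fin (m+1) // Even (b:ℕ)} ≃
        {b : Fin m // Even (b:ℕ)} ⊕ (PLift (Even m)) := by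
      refine ⟨fun x => if h : (x.1 : ℕ) < m then Sum.inl ⟨⟨x.1, h⟩, x.2⟩ else
          Sum.inr ⟨by
            have : (x.1 : ℕ) = m := by omega
            exact this ▸ x.2⟩,
        fun x => x.elim (fun b => ⟨⟨b.1.1, by omega⟩, b.2⟩) (fun h => ⟨⟨m, by omega⟩, h.1⟩),
        ?_, ?_⟩
      · rintro ⟨⟨v, hv⟩, h⟩
        dsimp only
        by_cases hvm : v < m
        · rw [dif_pos hvm]
          try rfl
        · rw [dif_neg hvm]
          have : v = m := by omega
          subst this
          rfl
      · rintro (⟨⟨v, hv⟩, h⟩ | ⟨h⟩)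
        · dsimp only [Sum.elim_inl]
          rw [dif_pos hv]
          try rfl
        · dsimp only [Sum.elim_inr]
          rw [dif_neg (Nat.lt_irrefl m)]
    rw [Nat.card_congr he, Nat.card_sum]
    by_cases h : Even m
    · haveI : Unique (PLift (Even m)) := ⟨⟨⟨h⟩⟩, fun x => rfl⟩
      rw [Nat.card_unique (α := PLift (Even m))]
      have h2 : m % 2 = 0 := Nat.even_iff.1 h
      omega
    · haveI : IsEmpty (PLift (Even m)) := ⟨fun x => h x.1⟩
      rw [Nat.card_of_isEmpty (α := PLift (Even m))]
      have h2 : m % 2 = 1 := Nat.odd_iff.1 (Nat.not_even_iff_odd.1 h)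
      omega

theorem stmt9_sigma_count {k : ℕ} (na : Fin k → ℕ) :
    Nat.card {i : Σ a : Fin k, Fin (na a) // Even ((i.2 : ℕ))} =
      ∑ a : Fin k, Nat.card {b : Fin (na a) // Even (b : ℕ)} := by
  have e : {i : Σ a : Fin k, Fin (na a) // Even ((i.2 : ℕ))} ≃
      Σ a : Fin k, {b : Fin (na a) // Even (b : ℕ)} :=
    ⟨fun x => ⟨x.1.1, x.1.2, x.2⟩, fun x => ⟨⟨x.1, x.2.1⟩, x.2.2⟩,
      fun ⟨⟨a, b⟩, h⟩ => rfl, fun ⟨a, b, h⟩ => rfl⟩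
  rw [Nat.card_congr e]
  classical
  rw [Nat.card_eq_fintype_card, Fintype.card_sigma]
  congr 1
  ext a
  rw [Nat.card_eq_fintype_card]

theorem stmt9_sum_get_eq {M : Type*} [AddCommMonoid M] (l : List ℕ) (g : ℕ → M) :
    ∑ i : Fin l.length, g (l.get i) = (l.map g).sum := by
  conv_rhs => rw [← List.ofFn_get l]
  rw [List.map_ofFn, List.sum_ofFn]
  rfl

theorem stmt9_mod2_filter (l : List ℕ) :
    (l.map (fun m => m % 2)).sum = (l.filter (fun i => Odd i)).length := by
  induction l with
  | nil => simp
  | cons x xs ih =>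
    rw [List.map_cons, List.sum_cons, List.filter_cons, ih]
    by_cases h : Odd x
    · have : x % 2 = 1 := Nat.odd_iff.1 h
      simp [h, this]; try omega
    · have : x % 2 = 0 := Nat.even_iff.1 (Nat.not_odd_iff_even.1 h)
      simp [h, this]; try omega

/-! ### Monomial combinatorics in `ℂ[x,y]` -/

abbrev stmt9Rxy := MvPolynomial (Fin 2) ℂ

def stmt9Dxy (a b : ℕ) : Fin 2 →₀ ℕ := Finsupp.single 0 a + Finsupp.single 1 b

theorem stmt9Dxy_apply0 (a b : ℕ) : stmt9Dxy a b 0 = a := by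
  simp [stmt9Dxy, Finsupp.single_apply]

theorem stmt9Dxy_apply1 (a b : ℕ) : stmt9Dxy a b 1 = b := by
  simp [stmt9Dxy, Finsupp.single_apply]

theorem stmt9Dxy_eq_self (d : Fin 2 →₀ ℕ) : stmt9Dxy (d 0) (d 1) = d := by
  ext i
  fin_cases i
  · exact stmt9Dxy_apply0 _ _
  · exact stmt9Dxy_apply1 _ _

theorem stmt9Dxy_add (a b a' b' : ℕ) :
    stmt9Dxy a b + stmt9Dxy a' b' = stmt9Dxy (a + a') (b + b') := by
  ext i
  fin_cases i <;> simp [stmt9Dxy_apply0, stmt9Dxy_apply1, stmt9Dxy, Finsupp.single_apply]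

theorem stmt9Dxy_inj {a b a' b' : ℕ} (h : stmt9Dxy a b = stmt9Dxy a' b') :
    a = a' ∧ b = b' := by
  constructor
  · rw [← stmt9Dxy_apply0 a b, h, stmt9Dxy_apply0]
  · rw [← stmt9Dxy_apply1 a b, h, stmt9Dxy_apply1]

theorem stmt9_monomial_Dxy (a b : ℕ) (c : ℂ) :
    (monomial (stmt9Dxy a b) c : stmt9Rxy) = C c * X 0 ^ a * X 1 ^ b := by
  rw [X_pow_eq_monomial, X_pow_eq_monomial, ← monomial_zero', monomial_mul, monomial_mul,
    mul_one, mul_one, stmt9Dxy]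
  rw [zero_add]

theorem stmt9_monomial_Dxy_mul (a b a' b' : ℕ) (c : ℂ) :
    (monomial (stmt9Dxy a b) 1 : stmt9Rxy) * monomial (stmt9Dxy a' b') c =
      monomial (stmt9Dxy (a+a') (b+b')) c := by
  rw [monomial_mul, one_mul, stmt9Dxy_add]

def stmt9good (l : List ℕ) (d : Fin 2 →₀ ℕ) : Prop :=
  d 0 < l.length ∧ d 1 < l.getD (d 0) 0

theorem stmt9good_anti {l : List ℕ} (hsort : l.Pairwise (· ≥ ·)) {d d' : Fin 2 →₀ ℕ}
    (h0 : d 0 ≤ d' 0) (h1 : d 1 ≤ d' 1) (h : stmt9good l d') : stmt9good l d := by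
  obtain ⟨ha, hb⟩ := h
  have hk : d 0 < l.length := lt_of_le_of_lt h0 ha
  refine ⟨hk, ?_⟩
  have hle : l.getD (d' 0) 0 ≤ l.getD (d 0) 0 := by
    rw [List.getD_eq_getElem l 0 ha, List.getD_eq_getElem l 0 hk]
    exact hsort.rel_get_of_le (a := ⟨d 0, hk⟩) (b := ⟨d' 0, ha⟩) h0
  omega

abbrev stmt9gen (l : List ℕ) (a : Fin l.length) : stmt9Rxy :=
  (X 0 : stmt9Rxy) ^ (a : ℕ) * X 1 ^ l.get a

theorem stmt9gen_eq (l : List ℕ) (a : Fin l.length) :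
    stmt9gen l a = monomial (stmt9Dxy (a : ℕ) (l.get a)) 1 := by
  rw [stmt9_monomial_Dxy, map_one, one_mul]

theorem stmt9Xk_eq (l : List ℕ) :
    (X 0 : stmt9Rxy) ^ l.length = monomial (stmt9Dxy l.length 0) 1 := by
  rw [stmt9_monomial_Dxy, map_one, one_mul, pow_zero, mul_one]

theorem stmt9_mem_of_bad {l : List ℕ} {I : Ideal stmt9Rxy}
    (hI : I = Ideal.span
      (Set.range (fun a : Fin l.length => stmt9gen l a) ∪ {(X 0 : stmt9Rxy) ^ l.length}))
    {d : Fin 2 →₀ ℕ} (hd : ¬ stmt9good l d) (c : ℂ) : (monomial d c : stmt9Rxy) ∈ I := by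
  have hgen : ∀ a : Fin l.length, stmt9gen l a ∈ I := fun a =>
    hI ▸ Ideal.subset_span (Or.inl ⟨a, rfl⟩)
  have hXk : (X 0 : stmt9Rxy) ^ l.length ∈ I := hI ▸ Ideal.subset_span (Or.inr rfl)
  rw [stmt9good] at hd
  push_neg at hd
  by_cases ha : d 0 < l.length
  · have hb : l.getD (d 0) 0 ≤ d 1 := hd ha
    set m := l.get ⟨d 0, ha⟩ with hm
    have hm' : l.getD (d 0) 0 = m := by rw [List.getD_eq_getElem l 0 ha]; rfl
    have key : (monomial d c : stmt9Rxy) =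
        stmt9gen l ⟨d 0, ha⟩ * monomial (stmt9Dxy 0 (d 1 - m)) c := by
      rw [stmt9gen_eq, stmt9_monomial_Dxy_mul]
      have h1 : ((⟨d 0, ha⟩ : Fin l.length) : ℕ) + 0 = d 0 := by simp
      have h2 : l.get ⟨d 0, ha⟩ + (d 1 - m) = d 1 := by omega
      rw [h1, h2, stmt9Dxy_eq_self]
    rw [key]
    exact Ideal.mul_mem_right _ _ (hgen _)
  · have key : (monomial d c : stmt9Rxy) =
        (X 0 : stmt9Rxy) ^ l.length * monomial (stmt9Dxy (d 0 - l.length) (d 1)) c := by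
      rw [stmt9Xk_eq, stmt9_monomial_Dxy_mul]
      have h1 : l.length + (d 0 - l.length) = d 0 := by omega
      have h2 : 0 + d 1 = d 1 := by omega
      rw [h1, h2, stmt9Dxy_eq_self]
    rw [key]
    exact Ideal.mul_mem_right _ _ hXk

def stmt9MI (l : List ℕ) (hsort : l.Pairwise (· ≥ ·)) : Ideal stmt9Rxy where
  carrier := {f | ∀ d ∈ f.support, ¬ stmt9good l d}
  zero_mem' := by simp
  add_mem' := by
    intro f g hf hg d hd
    classical
    rcases Finset.mem_union.1 (MvPolynomial.support_add hd) with h | h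
    · exact hf d h
    · exact hg d h
  smul_mem' := by
    intro p f hf d hd
    classical
    have := MvPolynomial.support_mul p f hd
    rcases Finset.mem_add.1 this with ⟨e, he, e', he', rfl⟩
    intro hgood
    exact hf e' he' (stmt9good_anti hsort (by simp) (by simp) hgood)

theorem stmt9_I_le_MI {l : List ℕ} (hsort : l.Pairwise (· ≥ ·)) {I : Ideal stmt9Rxy}
    (hI : I = Ideal.span
      (Set.range (fun a : Fin l.length => stmt9gen l a) ∪ {(X 0 : stmt9Rxy) ^ l.length})) :
    I ≤ stmt9MI l hsort := by
  rw [hI, Ideal.span_le]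
  rintro g (⟨a, rfl⟩ | rfl)
  · intro d hd
    dsimp only at hd
    rw [stmt9gen_eq] at hd
    rw [MvPolynomial.support_monomial, if_neg one_ne_zero] at hd
    rw [Finset.mem_singleton] at hd
    subst hd
    rw [stmt9good, stmt9Dxy_apply0, stmt9Dxy_apply1]
    rintro ⟨h1, h2⟩
    rw [List.getD_eq_getElem l 0 h1] at h2
    have : l.get a = l[(a:ℕ)] := rfl
    omega
  · intro d hd
    rw [stmt9Xk_eq] at hd
    rw [MvPolynomial.support_monomial, if_neg one_ne_zero, Finset.mem_singleton] at hd
    subst hd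
    rw [stmt9good, stmt9Dxy_apply0]
    omega

/-! ### The action of `σ` on monomials -/

theorem stmt9_sigma_monomial {σ : stmt9Rxy →ₐ[ℂ] stmt9Rxy}
    (hσ : σ = aeval ![(X 0 : stmt9Rxy), -X 1]) (a b : ℕ) (c : ℂ) :
    σ (monomial (stmt9Dxy a b) c) = ((-1 : ℂ) ^ b) • monomial (stmt9Dxy a b) c := by
  have hX0 : σ (X 0) = X 0 := by subst hσ; simp
  have hX1 : σ (X 1) = -X 1 := by subst hσ; simp
  have hC : σ (C c) = C c := by
    have h := σ.commutes c
    rwa [MvPolynomial.algebraMap_eq] at h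
  rw [stmt9_monomial_Dxy, map_mul, map_mul, map_pow, map_pow, hX0, hX1, hC, neg_pow]
  have h1 : ((-1 : stmt9Rxy)) ^ b = C ((-1 : ℂ) ^ b) := by rw [map_pow, map_neg, map_one]
  rw [h1, smul_eq_C_mul]
  ring

theorem stmt9_sigma_sigma {σ : stmt9Rxy →ₐ[ℂ] stmt9Rxy}
    (hσ : σ = aeval ![(X 0 : stmt9Rxy), -X 1]) (f : stmt9Rxy) :
    σ (σ f) = f := by
  have : σ.comp σ = AlgHom.id ℂ stmt9Rxy := by
    apply MvPolynomial.algHom_ext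
    intro i
    fin_cases i <;> subst hσ <;> simp
  calc σ (σ f) = (σ.comp σ) f := rfl
  _ = f := by rw [this]; rfl

/-! ### The index type and the monomial basis of the quotient -/

abbrev stmt9Idx (l : List ℕ) := Σ a : Fin l.length, Fin (l.get a)

def stmt9phi (l : List ℕ) (i : stmt9Idx l) : Fin 2 →₀ ℕ := stmt9Dxy i.1 i.2

theorem stmt9good_phi (l : List ℕ) (i : stmt9Idx l) : stmt9good l (stmt9phi l i) := by
  refine ⟨?_, ?_⟩
  · rw [stmt9phi, stmt9Dxy_apply0]; exact i.1.isLt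
  · rw [stmt9phi, stmt9Dxy_apply0, stmt9Dxy_apply1, List.getD_eq_getElem l 0 i.1.isLt]
    exact i.2.isLt

theorem stmt9phi_inj (l : List ℕ) : Function.Injective (stmt9phi l) := by
  rintro ⟨a, b⟩ ⟨a', b'⟩ h
  obtain ⟨h1, h2⟩ := stmt9Dxy_inj h
  dsimp at h1 h2
  have ha : a = a' := Fin.ext h1
  subst ha
  have hb : b = b' := Fin.ext h2
  subst hb
  rfl

theorem stmt9good_exists {l : List ℕ} {d : Fin 2 →₀ ℕ} (h : stmt9good l d) :
    ∃ i : stmt9Idx l, stmt9phi l i = d := by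
  obtain ⟨h1, h2⟩ := h
  rw [List.getD_eq_getElem l 0 h1] at h2
  exact ⟨⟨⟨d 0, h1⟩, ⟨d 1, h2⟩⟩, stmt9Dxy_eq_self d⟩

end StmtAux

/-- For a partition `λ` of `n` (given as the sorted list `l` of its parts), the algebra
automorphism `σ` of `ℂ[x,y]` with `σ(x) = x`, `σ(y) = −y` maps the monomial ideal `I_λ` to
itself, hence induces a linear involution `T` of `ℂ[x,y]/I_λ`; the `+1`-eigenspace of `T` has
dimension `(n + ℓ_odd(λ))/2` and the `−1`-eigenspace has dimension `(n − ℓ_odd(λ))/2`.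
In particular `n ≡ ℓ_odd(λ) (mod 2)`. -/
theorem stmt9 (n : ℕ) (l : List ℕ) (hsort : l.Pairwise (· ≥ ·)) (hpos : ∀ i ∈ l, 0 < i)
    (hsum : l.sum = n)
    (I : Ideal (MvPolynomial (Fin 2) ℂ))
    (hI : I = Ideal.span
      (Set.range (fun a : Fin l.length =>
          (X 0 : MvPolynomial (Fin 2) ℂ) ^ (a : ℕ) * X 1 ^ l.get a) ∪
        {(X 0 : MvPolynomial (Fin 2) ℂ) ^ l.length}))
    (σ : MvPolynomial (Fin 2) ℂ →ₐ[ℂ] MvPolynomial (Fin 2) ℂ)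
    (hσ : σ = aeval ![(X 0 : MvPolynomial (Fin 2) ℂ), -X 1]) :
    (∀ f ∈ I, σ f ∈ I) ∧
    ∃ T : Module.End ℂ (MvPolynomial (Fin 2) ℂ ⧸ I),
      (∀ f, T (Ideal.Quotient.mk I f) = Ideal.Quotient.mk I (σ f)) ∧
      T ∘ₗ T = LinearMap.id ∧
      2 * Module.finrank ℂ (T.eigenspace 1) = n + (l.filter (fun i => Odd i)).length ∧
      (l.filter (fun i => Odd i)).length ≤ n ∧
      2 * Module.finrank ℂ (T.eigenspace (-1)) = n - (l.filter (fun i => Odd i)).length ∧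
      n % 2 = (l.filter (fun i => Odd i)).length % 2 := by
  classical
  have hI' : I = Ideal.span
      (Set.range (fun a : Fin l.length => stmt9gen l a) ∪
        {(X 0 : stmt9Rxy) ^ l.length}) := hI
  -- generators are in I
  have hgen : ∀ a : Fin l.length, stmt9gen l a ∈ I := fun a =>
    hI' ▸ Ideal.subset_span (Or.inl ⟨a, rfl⟩)
  have hXk : (X 0 : stmt9Rxy) ^ l.length ∈ I := hI' ▸ Ideal.subset_span (Or.inr rfl)
  -- σ maps I into I
  have hmapI : ∀ f ∈ I, σ f ∈ I := by
    have hle : Ideal.span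
        (Set.range (fun a : Fin l.length => stmt9gen l a) ∪
          {(X 0 : stmt9Rxy) ^ l.length}) ≤ Ideal.comap σ I := by
      rw [Ideal.span_le]
      rintro g (⟨a, rfl⟩ | rfl)
      · rw [SetLike.mem_coe, Ideal.mem_comap]
        show σ (stmt9gen l a) ∈ I
        rw [stmt9gen_eq, stmt9_sigma_monomial hσ]
        exact Submodule.smul_of_tower_mem I _ (stmt9gen_eq l a ▸ hgen a)
      · rw [SetLike.mem_coe, Ideal.mem_comap]
        show σ ((X 0 : stmt9Rxy) ^ l.length) ∈ I
        rw [stmt9Xk_eq, stmt9_sigma_monomial hσ, pow_zero, one_smul, ← stmt9Xk_eq]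
        exact hXk
    exact fun f hf => Ideal.mem_comap.1 (hle (hI' ▸ hf))
  refine ⟨hmapI, ?_⟩
  -- the induced involution T
  have h0 : ∀ a ∈ I, ((Ideal.Quotient.mkₐ ℂ I).comp σ) a = 0 := by
    intro a ha
    rw [AlgHom.comp_apply, Ideal.Quotient.mkₐ_eq_mk, Ideal.Quotient.eq_zero_iff_mem]
    exact hmapI a ha
  set T : Module.End ℂ (MvPolynomial (Fin 2) ℂ ⧸ I) :=
    (Ideal.Quotient.liftₐ I ((Ideal.Quotient.mkₐ ℂ I).comp σ) h0).toLinearMap with hTdef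
  have hT : ∀ f, T (Ideal.Quotient.mk I f) = Ideal.Quotient.mk I (σ f) := by
    intro f
    rw [hTdef]
    show Ideal.Quotient.liftₐ I ((Ideal.Quotient.mkₐ ℂ I).comp σ) h0
      (Ideal.Quotient.mk I f) = _
    rw [Ideal.Quotient.liftₐ_apply]
    erw [Ideal.Quotient.lift_mk]
  have hTT : T ∘ₗ T = LinearMap.id := by
    apply LinearMap.ext
    intro q
    obtain ⟨f, rfl⟩ := Ideal.Quotient.mk_surjective q
    rw [LinearMap.comp_apply, hT, hT, stmt9_sigma_sigma hσ, LinearMap.id_apply]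
  have hmkl : ∀ (c : ℂ) (p : stmt9Rxy),
      Ideal.Quotient.mk I (c • p) = c • Ideal.Quotient.mk I p := by
    intro c p
    rw [← Ideal.Quotient.mkₐ_eq_mk ℂ, map_smul]
  -- the monomial basis of the quotient
  set v : stmt9Idx l → (MvPolynomial (Fin 2) ℂ ⧸ I) :=
    fun i => Ideal.Quotient.mk I (monomial (stmt9phi l i) 1) with hvdef
  have hli : LinearIndependent ℂ v := by
    rw [linearIndependent_iff']
    intro s g hg j hj
    by_contra hgj
    set f : stmt9Rxy := ∑ i ∈ s, monomial (stmt9phi l i) (g i) with hfdef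
    have hmk : Ideal.Quotient.mk I f = 0 := by
      rw [hfdef, map_sum, ← hg]
      apply Finset.sum_congr rfl
      intro i _
      rw [hvdef]
      have : monomial (stmt9phi l i) (g i) = g i • monomial (stmt9phi l i) (1 : ℂ) := by
        rw [smul_monomial, smul_eq_mul, mul_one]
      rw [this, hmkl]
    have hfI : f ∈ I := Ideal.Quotient.eq_zero_iff_mem.1 hmk
    have hbad := stmt9_I_le_MI hsort hI' hfI
    have hcoeff : coeff (stmt9phi l j) f = g j := by
      rw [hfdef, MvPolynomial.coeff_sum]
      rw [Finset.sum_eq_single j]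
      · rw [coeff_monomial, if_pos rfl]
      · intro i _ hij
        rw [coeff_monomial, if_neg (fun h => hij (stmt9phi_inj l h))]
      · intro h
        exact absurd hj h
    have hmem : stmt9phi l j ∈ f.support := by
      rw [MvPolynomial.mem_support_iff, hcoeff]
      exact hgj
    exact hbad _ hmem (stmt9good_phi l j)
  have hsp : ⊤ ≤ Submodule.span ℂ (Set.range v) := by
    intro q _
    obtain ⟨f, rfl⟩ := Ideal.Quotient.mk_surjective q
    rw [← MvPolynomial.support_sum_monomial_coeff f, map_sum]
    apply Submodule.sum_mem
    intro d _
    by_cases hgood : stmt9good l d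
    · obtain ⟨i, rfl⟩ := stmt9good_exists hgood
      have : (monomial (stmt9phi l i) (coeff (stmt9phi l i) f) : stmt9Rxy) =
          coeff (stmt9phi l i) f • monomial (stmt9phi l i) (1 : ℂ) := by
        rw [smul_monomial, smul_eq_mul, mul_one]
      rw [this, hmkl]
      exact Submodule.smul_mem _ _ (Submodule.subset_span ⟨i, rfl⟩)
    · have : Ideal.Quotient.mk I (monomial d (coeff d f)) = 0 :=
        Ideal.Quotient.eq_zero_iff_mem.2 (stmt9_mem_of_bad hI' hgood _)
      rw [this]
      exact Submodule.zero_mem _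
  set b : Module.Basis (stmt9Idx l) ℂ (MvPolynomial (Fin 2) ℂ ⧸ I) := Module.Basis.mk hli hsp with hbdef
  -- action of T on the basis
  have hTb : ∀ i : stmt9Idx l, T (b i) = ((-1 : ℂ) ^ ((i.2 : ℕ))) • b i := by
    intro i
    have hbi : b i = Ideal.Quotient.mk I (monomial (stmt9phi l i) 1) := by
      rw [hbdef, Module.Basis.mk_apply]
    rw [hbi]
    have hphi : stmt9phi l i = stmt9Dxy (i.1 : ℕ) ((i.2 : ℕ)) := rfl
    rw [hT, hphi, stmt9_sigma_monomial hσ, hmkl]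
  have hTb1 : ∀ i : stmt9Idx l, Even ((i.2 : ℕ)) → T (b i) = (1 : ℂ) • b i := by
    intro i hi
    rw [hTb i, hi.neg_one_pow]
  have hTb2 : ∀ i : stmt9Idx l, ¬ Even ((i.2 : ℕ)) → T (b i) = (-1 : ℂ) • b i := by
    intro i hi
    rw [hTb i, (Nat.not_even_iff_odd.1 hi).neg_one_pow]
  -- eigenspace dimensions
  have hE1 : Module.finrank ℂ (T.eigenspace 1) =
      Nat.card {i : stmt9Idx l // Even ((i.2 : ℕ))} :=
    stmt9_eig_card b T 1 (-1) (by norm_num) _ hTb1 hTb2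
  have hE2 : Module.finrank ℂ (T.eigenspace (-1)) =
      Nat.card {i : stmt9Idx l // ¬ Even ((i.2 : ℕ))} :=
    stmt9_eig_card b T (-1) 1 (by norm_num) _ (fun i hi => hTb2 i hi) (fun i hi => hTb1 i (not_not.1 hi))
  -- counting
  set o := (l.filter (fun i => Odd i)).length with hodef
  have hcardn : Nat.card (stmt9Idx l) = n := by
    rw [Nat.card_eq_fintype_card, Fintype.card_sigma]
    simp only [Fintype.card_fin]
    have := stmt9_sum_get_eq l id
    rw [List.map_id] at this
    rw [← hsum, ← this]
    rfl
  have hcP : 2 * Nat.card {i : stmt9Idx l // Even ((i.2 : ℕ))} = n + o := by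
    rw [stmt9_sigma_count (na := fun a : Fin l.length => l.get a), Finset.mul_sum]
    have : ∀ a : Fin l.length,
        2 * Nat.card {b : Fin (l.get a) // Even ((b : ℕ))} = l.get a + l.get a % 2 :=
      fun a => stmt9_count_even (l.get a)
    rw [Finset.sum_congr rfl (fun a _ => this a), Finset.sum_add_distrib]
    rw [stmt9_sum_get_eq l (fun m => m % 2), stmt9_mod2_filter]
    have h1 : ∑ a : Fin l.length, l.get a = n := by
      have := stmt9_sum_get_eq l id
      rw [List.map_id] at this
      rw [← hsum, ← this]
      rfl
    rw [h1, hodef]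
  have hsplit : Nat.card {i : stmt9Idx l // Even ((i.2 : ℕ))} +
      Nat.card {i : stmt9Idx l // ¬ Even ((i.2 : ℕ))} = n := by
    rw [← hcardn]
    rw [← Nat.card_sum]
    exact Nat.card_congr (Equiv.sumCompl _)
  refine ⟨T, hT, hTT, ?_, ?_, ?_, ?_⟩
  · rw [hE1]; omega
  · omega
  · rw [hE2]; omega
  · omega
end
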